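/- Let δ: ℝ≥0 → ℝ^N be differentiable with δ(0) = 0 and boundary values δ_0(t) = δ_N(t) = 0, satisfying for all i ∈ [N] and t ≥ 0 the differential inequality dδ_i/dt ≤ −4(2δ_i − δ_{i−m_i} − δ_{i+m_i}) for some integers m_i ≥ 0 with 0 ≤ i − m_i and i + m_i ≤ N. Then sup_i δ_i(t) ≤ 0 for all t ≥ 0. -/

import Mathlib

open Filter Topology Set

/-- Discrete maximum principle: let `δ : ℝ≥0 → ℝ^{N+1}` be differentiable with
`δ(0) = 0` and boundary values `δ_0 ≡ δ_N ≡ 0`, and suppose that for integers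
`m_i` with `0 ≤ i − m_i` and `i + m_i ≤ N` one has
`dδ_i/dt ≤ −4 (2 δ_i − δ_{i−m_i} − δ_{i+m_i})` for all `t ≥ 0`.
Then `δ_i(t) ≤ 0` for all `i` and `t ≥ 0`. -/
theorem stmt_11 (N : ℕ) (δ : ℝ → Fin (N + 1) → ℝ)
    (hdiff : ∀ i, Differentiable ℝ (fun s => δ s i))
    (h0 : ∀ i, δ 0 i = 0)
    (hbdry : ∀ t : ℝ, δ t ⟨0, by omega⟩ = 0 ∧ δ t ⟨N, by omega⟩ = 0)
    (m : Fin (N + 1) → ℕ)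
    (hm1 : ∀ i : Fin (N + 1), m i ≤ (i : ℕ))
    (hm2 : ∀ i : Fin (N + 1), (i : ℕ) + m i ≤ N)
    (hineq : ∀ (i : Fin (N + 1)) (t : ℝ), 0 ≤ t →
      deriv (fun s => δ s i) t ≤
        -4 * (2 * δ t i - δ t ⟨(i : ℕ) - m i, by omega⟩ -
          δ t ⟨(i : ℕ) + m i, by have := hm2 i; omega⟩)) :
    ∀ (t : ℝ), 0 ≤ t → ∀ i, δ t i ≤ 0 := by
  have hcont : ∀ i, Continuous fun s => δ s i := fun i => (hdiff i).continuous
  have key : ∀ ε : ℝ, 0 < ε → ∀ t : ℝ, 0 ≤ t → ∀ i, δ t i < ε * (t + 1) := by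
    intro ε hε
    by_contra hcon
    push_neg at hcon
    obtain ⟨t₁, ht₁, i₁, hi₁⟩ := hcon
    set S : Set ℝ := {t | 0 ≤ t ∧ ∃ i, ε * (t + 1) ≤ δ t i} with hSdef
    have hSne : S.Nonempty := ⟨t₁, ht₁, i₁, hi₁⟩
    have hSclosed : IsClosed S := by
      have hrw : S = Set.Ici 0 ∩ ⋃ i, {t | ε * (t + 1) ≤ δ t i} := by
        ext t; simp [hSdef, Set.mem_iUnion]
      rw [hrw]
      exact isClosed_Ici.inter (isClosed_iUnion_of_finite fun i =>
        isClosed_le (by continuity) (hcont i))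
    have hSbdd : BddBelow S := ⟨0, fun t ht => ht.1⟩
    set T := sInf S with hTdef
    have hTS : T ∈ S := hSclosed.csInf_mem hSne hSbdd
    obtain ⟨hT0, i, hi⟩ := hTS
    have hTpos : 0 < T := by
      rcases eq_or_lt_of_le hT0 with h | h
      · exfalso
        rw [← h, h0 i] at hi
        nlinarith
      · exact h
    have hlt : ∀ t : ℝ, 0 ≤ t → t < T → ∀ j, δ t j < ε * (t + 1) := by
      intro t h0t htT j
      by_contra h'
      push_neg at h'
      exact absurd (csInf_le hSbdd ⟨h0t, j, h'⟩) (not_le.2 htT)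
    have hIoo : Set.Ioo (0 : ℝ) T ∈ 𝓝[<] T := Ioo_mem_nhdsLT_of_mem ⟨hTpos, le_refl T⟩
    have hle : ∀ j, δ T j ≤ ε * (T + 1) := by
      intro j
      have h1 : Tendsto (fun t => δ t j) (𝓝[<] T) (𝓝 (δ T j)) :=
        ((hcont j).tendsto T).mono_left nhdsWithin_le_nhds
      have h2 : Tendsto (fun t : ℝ => ε * (t + 1)) (𝓝[<] T) (𝓝 (ε * (T + 1))) :=
        (Continuous.tendsto (by continuity) T).mono_left nhdsWithin_le_nhds
      refine le_of_tendsto_of_tendsto h1 h2 ?_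
      filter_upwards [hIoo] with t ht
      exact (hlt t ht.1.le ht.2 j).le
    have hiq : δ T i = ε * (T + 1) := le_antisymm (hle i) hi
    -- lower bound on the derivative
    set g : ℝ → ℝ := fun t => δ t i - ε * (t + 1) with hgdef
    have hgT : g T = 0 := by simp [hgdef, hiq]
    have hderiv1 : HasDerivAt (fun t : ℝ => ε * (t + 1)) ε T := by
      have := ((hasDerivAt_id T).add_const (1 : ℝ)).const_mul ε
      simpa using this
    have hg : HasDerivAt g (deriv (fun s => δ s i) T - ε) T :=
      ((hdiff i).differentiableAt.hasDerivAt).sub hderiv1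
    have hslope : Tendsto (slope g T) (𝓝[<] T) (𝓝 (deriv (fun s => δ s i) T - ε)) :=
      (hasDerivAt_iff_tendsto_slope.1 hg).mono_left
        (nhdsWithin_mono T fun x hx => ne_of_lt hx)
    have hge : 0 ≤ deriv (fun s => δ s i) T - ε := by
      refine ge_of_tendsto hslope ?_
      filter_upwards [hIoo] with t ht
      have hgt : g t < 0 := by
        have := hlt t ht.1.le ht.2 i
        simp only [hgdef]; linarith
      have : 0 < (g t - g T) / (t - T) := by
        apply div_pos_of_neg_of_neg <;> [skip; skip] <;> rw [hgT] at * <;>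
          first | linarith [ht.2] | linarith
      simpa [slope_def_field, hgT] using this.le
    -- upper bound on the derivative
    have hub := hineq i T hT0
    have ha : δ T ⟨(i : ℕ) - m i, by omega⟩ ≤ δ T i := by rw [hiq]; exact hle _
    have hb : δ T ⟨(i : ℕ) + m i, by have := hm2 i; omega⟩ ≤ δ T i := by
      rw [hiq]; exact hle _
    nlinarith
  intro t ht i
  by_contra hpos
  push_neg at hpos
  have ht1 : (0 : ℝ) < t + 1 := by linarith
  have := key (δ t i / (2 * (t + 1))) (by positivity) t ht i
  rw [div_mul_eq_mul_div, mul_comm] at this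
  have heq : (t + 1) * δ t i / (2 * (t + 1)) = δ t i / 2 := by
    field_simp
  rw [heq] at this
  linarith
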